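/- For any half-Bernoulli distribution H_{k,μ} (point masses at k ∈ [0,1) and 1, mean μ), any sample size n ≥ 1, and any α ∈ (0,1), if Z denotes the order statistics of n i.i.d. samples from H_{k,μ} and m_α is defined as the (1-α)-quantile of m(Z,U) over uniform order statistics U, then P(m_α(Z) ≥ μ) ≥ 1 - α. -/

import Mathlib

open MeasureTheory

noncomputable section

def sortVec {n : ℕ} (x : Fin n → ℝ) : Fin n → ℝ := x ∘ Tuple.sort x

def unifCube (n : ℕ) : Measure (Fin n → ℝ) :=
  Measure.pi fun _ => volume.restrict (Set.Icc (0:ℝ) 1)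

def mInd {n : ℕ} (z u : Fin n → ℝ) : ℝ :=
  1 - ∑ i : Fin n, u i * ((Fin.snoc z 1 : Fin (n+1) → ℝ) i.succ - z i)

def quant (p : ℝ) {Ω : Type*} [MeasurableSpace Ω] (μ : Measure Ω) (Y : Ω → ℝ) : ℝ :=
  sInf {t : ℝ | ENNReal.ofReal p ≤ μ {ω | Y ω ≤ t}}

def mAlpha {n : ℕ} (α : ℝ) (z : Fin n → ℝ) : ℝ :=
  quant (1 - α) (unifCube n) (fun ω => mInd z (sortVec ω))

def betaCDF (a b : ℕ) (p : ℝ) : ℝ :=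
  (Real.Gamma ((a : ℝ) + b) / (Real.Gamma a * Real.Gamma b)) *
    ∫ t in (0:ℝ)..p, t ^ (a - 1) * (1 - t) ^ (b - 1)

def halfBern (k p : ℝ) : Measure ℝ :=
  ENNReal.ofReal p • Measure.dirac k + ENNReal.ofReal (1 - p) • Measure.dirac 1

def consComp (n : ℕ) (z u : ℕ → ℝ) (x : ℝ) : ℝ :=
  if 1 ≤ x then 1
  else ((((Finset.Icc 1 n).filter (fun i => z i ≤ x)).image u).max).unbotD 0

/-! ### Auxiliary lemmas -/

namespace Stmt9Aux

open Finset
open scoped ENNReal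

variable {n : ℕ}

def zvec (n : ℕ) (k : ℝ) (j : ℕ) : Fin n → ℝ := fun i => if (i:ℕ) < j then k else 1

def pointT (n : ℕ) (k : ℝ) (T : Finset (Fin n)) : Fin n → ℝ := fun i => if i ∈ T then k else 1

def Wt (n : ℕ) (p : ℝ) (T : Finset (Fin n)) : ℝ≥0∞ :=
  ENNReal.ofReal p ^ T.card * ENNReal.ofReal (1 - p) ^ (n - T.card)

lemma card_filter_comp' (σ : Equiv.Perm (Fin n)) (P : Fin n → Prop) [DecidablePred P] :
    (univ.filter fun i => P (σ i)).card = (univ.filter P).card := by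
  apply Finset.card_bij (fun i _ => σ i)
  · intro a ha; simp only [mem_filter, mem_univ, true_and] at ha ⊢; exact ha
  · intro a _ b _ h; exact σ.injective h
  · intro b hb
    refine ⟨σ.symm b, ?_, by simp⟩
    simp only [mem_filter, mem_univ, true_and] at hb ⊢
    simpa using hb

lemma monotone_count_le {v : Fin n → ℝ} (hv : Monotone v) {m : ℕ} (hm : m < n) (p : ℝ) :
    p < v ⟨m, hm⟩ ↔ (univ.filter fun i => v i ≤ p).card ≤ m := by
  constructor
  · intro h
    have hsub : (univ.filter fun i => v i ≤ p) ⊆ Finset.Iio ⟨m, hm⟩ := by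
      intro i hi
      simp only [mem_filter, mem_univ, true_and] at hi
      rw [Finset.mem_Iio]
      by_contra hle
      push_neg at hle
      exact absurd (le_trans (hv hle) hi) (not_le.2 h)
    have := Finset.card_le_card hsub
    rwa [Fin.card_Iio] at this
  · intro h
    by_contra hle
    push_neg at hle
    have hsub : Finset.Iic (⟨m, hm⟩ : Fin n) ⊆ univ.filter fun i => v i ≤ p := by
      intro i hi
      simp only [Finset.mem_Iic] at hi
      simp only [mem_filter, mem_univ, true_and]
      exact le_trans (hv hi) hle
    have := Finset.card_le_card hsub
    rw [Fin.card_Iic, Fin.val_mk] at this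
    omega

lemma nu1_fin : IsFiniteMeasure (volume.restrict (Set.Icc (0:ℝ) 1)) := by
  constructor
  rw [Measure.restrict_apply_univ, Real.volume_Icc]
  simp

lemma nu1_Icc : (volume.restrict (Set.Icc (0:ℝ) 1)) (Set.Icc 0 1) = 1 := by
  rw [Measure.restrict_apply measurableSet_Icc, Set.inter_self, Real.volume_Icc]
  norm_num

lemma nu1_univ : (volume.restrict (Set.Icc (0:ℝ) 1)) Set.univ = 1 := by
  rw [Measure.restrict_apply_univ, Real.volume_Icc]
  norm_num

lemma nu1_Iic {p : ℝ} (h0 : 0 ≤ p) (h1 : p ≤ 1) :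
    (volume.restrict (Set.Icc (0:ℝ) 1)) (Set.Iic p) = ENNReal.ofReal p := by
  rw [Measure.restrict_apply measurableSet_Iic]
  have h : Set.Iic p ∩ Set.Icc 0 1 = Set.Icc 0 p := by
    ext x
    simp only [Set.mem_inter_iff, Set.mem_Iic, Set.mem_Icc]
    constructor
    · rintro ⟨h, h', _⟩; exact ⟨h', h⟩
    · rintro ⟨h, h'⟩; exact ⟨h', h, le_trans h' h1⟩
  rw [h, Real.volume_Icc, sub_zero]

lemma nu1_Ioi {p : ℝ} (h0 : 0 ≤ p) (h1 : p ≤ 1) :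
    (volume.restrict (Set.Icc (0:ℝ) 1)) (Set.Ioi p) = ENNReal.ofReal (1 - p) := by
  rw [Measure.restrict_apply measurableSet_Ioi]
  have h : Set.Ioi p ∩ Set.Icc 0 1 = Set.Ioc p 1 := by
    ext x
    simp only [Set.mem_inter_iff, Set.mem_Ioi, Set.mem_Icc, Set.mem_Ioc]
    constructor
    · rintro ⟨h, _, h'⟩; exact ⟨h, h'⟩
    · rintro ⟨h, h'⟩; exact ⟨h, le_trans h0 (le_of_lt h), h'⟩
  rw [h, Real.volume_Ioc]

lemma prod_ite_const (a b : ℝ≥0∞) (T : Finset (Fin n)) :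
    (∏ i : Fin n, (if i ∈ T then a else b)) = a ^ T.card * b ^ (n - T.card) := by
  classical
  rw [← Finset.prod_mul_prod_compl T]
  rw [Finset.prod_ite_of_true (by intro i hi; exact hi),
      Finset.prod_ite_of_false (by intro i hi; simpa using hi)]
  rw [Finset.prod_const, Finset.prod_const, Finset.card_compl, Fintype.card_fin]

lemma cube_pi_set (p : ℝ) (T : Finset (Fin n)) :
    {ω : Fin n → ℝ | (univ.filter fun i => ω i ≤ p) = T}
      = Set.univ.pi (fun i => if i ∈ T then Set.Iic p else Set.Ioi p) := by
  ext ω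
  simp only [Set.mem_setOf_eq, Set.mem_pi, Set.mem_univ, forall_true_left, Finset.ext_iff,
    mem_filter, mem_univ, true_and]
  constructor
  · intro h i
    by_cases hi : i ∈ T
    · simp only [hi, if_true, Set.mem_Iic]
      exact (h i).2 hi
    · simp only [hi, if_false, Set.mem_Ioi]
      exact lt_of_not_ge fun hle => hi ((h i).1 hle)
  · intro h i
    by_cases hi : i ∈ T
    · have := h i
      simp only [hi, if_true, Set.mem_Iic] at this
      exact ⟨fun _ => hi, fun _ => this⟩
    · have := h i
      simp only [hi, if_false, Set.mem_Ioi] at this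
      exact ⟨fun hle => absurd hle (not_le.2 this), fun hT => absurd hT hi⟩

lemma cube_count (p : ℝ) (h0 : 0 ≤ p) (h1 : p ≤ 1) (r : ℕ) :
    unifCube n {ω | (univ.filter fun i => ω i ≤ p).card ≤ r}
      = ∑ T ∈ univ.powerset.filter (fun T : Finset (Fin n) => T.card ≤ r), Wt n p T := by
  classical
  haveI := nu1_fin
  have hset : {ω : Fin n → ℝ | (univ.filter fun i => ω i ≤ p).card ≤ r}
      = ⋃ T ∈ univ.powerset.filter (fun T : Finset (Fin n) => T.card ≤ r),
          {ω : Fin n → ℝ | (univ.filter fun i => ω i ≤ p) = T} := by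
    ext ω
    simp only [Set.mem_setOf_eq, Set.mem_iUnion, exists_prop, mem_filter, mem_powerset]
    constructor
    · intro h
      exact ⟨_, ⟨subset_univ _, h⟩, rfl⟩
    · rintro ⟨T, ⟨_, hT⟩, h⟩
      rw [h]; exact hT
  rw [hset, measure_biUnion_finset]
  · refine Finset.sum_congr rfl fun T _ => ?_
    rw [cube_pi_set, unifCube, Measure.pi_pi]
    have h2 : ∀ i : Fin n, (volume.restrict (Set.Icc (0:ℝ) 1))
        (if i ∈ T then Set.Iic p else Set.Ioi p)
        = (if i ∈ T then ENNReal.ofReal p else ENNReal.ofReal (1 - p)) := by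
      intro i
      by_cases hi : i ∈ T <;> simp only [hi, if_true, if_false]
      · exact nu1_Iic h0 h1
      · exact nu1_Ioi h0 h1
    rw [Finset.prod_congr rfl fun i _ => h2 i, prod_ite_const]
    rfl
  · intro T _ T' _ hne
    rw [Function.onFun, Set.disjoint_left]
    intro ω hω hω'
    exact hne (hω ▸ hω')
  · intro T _
    rw [cube_pi_set]
    exact MeasurableSet.univ_pi fun i => by
      by_cases hi : i ∈ T <;> simp only [hi, if_true, if_false]
      · exact measurableSet_Iic
      · exact measurableSet_Ioi

lemma snoc_zvec (k : ℝ) {j : ℕ} (hj : j ≤ n) :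
    (Fin.snoc (zvec n k j) 1 : Fin (n+1) → ℝ)
      = fun i : Fin (n+1) => if (i:ℕ) < j then k else 1 := by
  funext i
  refine Fin.lastCases ?_ ?_ i
  · rw [Fin.snoc_last]
    simp only [Fin.val_last]
    rw [if_neg (by omega)]
  · intro i
    rw [Fin.snoc_castSucc]
    simp only [zvec, Fin.coe_castSucc]

lemma mInd_zvec_zero {k : ℝ} (u : Fin n → ℝ) : mInd (zvec n k 0) u = 1 := by
  unfold mInd
  rw [snoc_zvec k (Nat.zero_le n)]
  have h : ∀ i : Fin n,
      u i * ((if ((i.succ : Fin (n+1)) : ℕ) < 0 then k else 1) - zvec n k 0 i) = 0 := by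
    intro i
    simp [zvec]
  rw [Finset.sum_congr rfl fun i _ => h i]
  simp

lemma mInd_zvec (k : ℝ) {j : ℕ} (hj1 : 1 ≤ j) (hjn : j ≤ n) (u : Fin n → ℝ) :
    mInd (zvec n k j) u = 1 - (1 - k) * u ⟨j-1, by omega⟩ := by
  unfold mInd
  rw [snoc_zvec k hjn]
  rw [Finset.sum_eq_single (⟨j-1, by omega⟩ : Fin n)]
  · simp only [zvec, Fin.val_succ, Fin.val_mk]
    rw [if_neg (by omega), if_pos (by omega)]
    ring_nf
  · intro b _ hb
    have hb' : (b : ℕ) ≠ j - 1 := fun h => hb (Fin.ext (by simpa using h))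
    simp only [zvec, Fin.val_succ]
    by_cases h1 : (b:ℕ) + 1 < j
    · rw [if_pos h1, if_pos (by omega)]
      ring
    · rw [if_neg h1, if_neg (by omega)]
      ring
  · intro h
    exact absurd (mem_univ _) h

lemma sortVec_pointT (k : ℝ) (hk1 : k < 1) (T : Finset (Fin n)) :
    sortVec (pointT n k T) = zvec n k T.card := by
  classical
  set z := sortVec (pointT n k T) with hz
  have hmono : Monotone z := Tuple.monotone_sort _
  have hmem : ∀ i, z i = k ∨ z i = 1 := by
    intro i
    have h0 : z i = pointT n k T ((Tuple.sort (pointT n k T)) i) := rfl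
    rw [h0]
    unfold pointT
    split
    · left; rfl
    · right; rfl
  have hcard : (univ.filter fun i => z i = k).card = T.card := by
    have h1 : (univ.filter fun i => z i = k).card
        = (univ.filter fun i => pointT n k T i = k).card := by
      rw [hz]
      unfold sortVec
      exact card_filter_comp' (Tuple.sort (pointT n k T)) (fun i => pointT n k T i = k)
    rw [h1]
    apply congrArg Finset.card
    ext i
    simp only [mem_filter, mem_univ, true_and, pointT]
    by_cases hi : i ∈ T
    · simp [hi]
    · simp only [hi, if_false, iff_false]
      simp [hi, Finset.mem_filter, (ne_of_lt hk1).symm]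
  have hdc : ∀ i i' : Fin n, i' ≤ i → z i = k → z i' = k := by
    intro i i' h hi
    rcases hmem i' with h' | h'
    · exact h'
    · exfalso
      have := hmono h
      rw [hi, h'] at this
      linarith
  funext i
  by_cases hik : z i = k
  · have hsub : Finset.Iic i ⊆ univ.filter fun i' => z i' = k := by
      intro i' hi'
      simp only [mem_filter, mem_univ, true_and]
      exact hdc i i' (Finset.mem_Iic.1 hi') hik
    have hc := Finset.card_le_card hsub
    rw [Fin.card_Iic, hcard] at hc
    rw [hik]
    unfold zvec
    rw [if_pos (by omega)]
  · have h1 : z i = 1 := (hmem i).resolve_left hik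
    have hsub : (univ.filter fun i' => z i' = k) ⊆ Finset.Iio i := by
      intro i' hi'
      simp only [mem_filter, mem_univ, true_and] at hi'
      rw [Finset.mem_Iio]
      by_contra hle
      push_neg at hle
      exact hik (hdc i' i hle hi')
    have hc := Finset.card_le_card hsub
    rw [Fin.card_Iio, hcard] at hc
    rw [h1]
    unfold zvec
    rw [if_neg (by omega)]

lemma mu_le_mAlpha (α : ℝ) (hα : α ∈ Set.Ioo (0:ℝ) 1)
    (k μ : ℝ) (hk1 : k < 1) (hμ1 : μ ≤ 1) {j : ℕ} (hjn : j ≤ n)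
    (hsmall : 1 ≤ j →
      unifCube n {ω | (univ.filter fun i => ω i ≤ (1-μ)/(1-k)).card ≤ j - 1}
        < ENNReal.ofReal (1 - α)) :
    μ ≤ mAlpha α (zvec n k j) := by
  haveI := nu1_fin
  unfold mAlpha quant
  apply le_csInf
  · refine ⟨1, ?_⟩
    simp only [Set.mem_setOf_eq]
    have hsub : (Set.univ.pi fun _ : Fin n => Set.Icc (0:ℝ) 1)
        ⊆ {ω : Fin n → ℝ | mInd (zvec n k j) (sortVec ω) ≤ 1} := by
      intro ω hω
      simp only [Set.mem_setOf_eq]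
      rcases Nat.eq_zero_or_pos j with hj0 | hj1
      · subst hj0; rw [mInd_zvec_zero]
      · rw [mInd_zvec k hj1 hjn]
        have h1 : 0 ≤ sortVec ω ⟨j-1, by omega⟩ :=
          (hω ((Tuple.sort ω) ⟨j-1, by omega⟩) (Set.mem_univ _)).1
        nlinarith
    calc ENNReal.ofReal (1-α) ≤ 1 := ENNReal.ofReal_le_one.2 (by linarith [hα.1])
    _ = unifCube n (Set.univ.pi fun _ : Fin n => Set.Icc (0:ℝ) 1) := by
        rw [unifCube, Measure.pi_pi]
        simp [nu1_Icc]
    _ ≤ _ := measure_mono hsub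
  · intro t ht
    simp only [Set.mem_setOf_eq] at ht
    by_contra hlt
    push_neg at hlt
    rcases Nat.eq_zero_or_pos j with hj0 | hj1
    · subst hj0
      have hempty : {ω : Fin n → ℝ | mInd (zvec n k 0) (sortVec ω) ≤ t} = ∅ := by
        ext ω
        simp only [Set.mem_setOf_eq, Set.mem_empty_iff_false, iff_false, not_le, mInd_zvec_zero]
        linarith
      rw [hempty, measure_empty] at ht
      rw [nonpos_iff_eq_zero, ENNReal.ofReal_eq_zero] at ht
      linarith [hα.2]
    · have hkpos : (0:ℝ) < 1 - k := by linarith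
      have hsub : {ω : Fin n → ℝ | mInd (zvec n k j) (sortVec ω) ≤ t}
          ⊆ {ω | (univ.filter fun i => ω i ≤ (1-μ)/(1-k)).card ≤ j - 1} := by
        intro ω hω
        simp only [Set.mem_setOf_eq] at hω ⊢
        rw [mInd_zvec k hj1 hjn] at hω
        set v := sortVec ω ⟨j-1, by omega⟩ with hv
        have hpv : (1-μ)/(1-k) < v := by
          rw [div_lt_iff₀ hkpos]
          calc 1 - μ < 1 - t := by linarith
          _ ≤ (1-k) * v := by linarith
          _ = v * (1-k) := mul_comm _ _
        have hcnt := (monotone_count_le (v := sortVec ω) (Tuple.monotone_sort ω)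
          (m := j - 1) (by omega) ((1-μ)/(1-k))).1 hpv
        have hinv : (univ.filter fun i => ω i ≤ (1-μ)/(1-k)).card
            = (univ.filter fun i => sortVec ω i ≤ (1-μ)/(1-k)).card := by
          unfold sortVec
          exact (card_filter_comp' (Tuple.sort ω) (fun i => ω i ≤ (1-μ)/(1-k))).symm
        rw [hinv]
        exact hcnt
      exact absurd (le_trans ht (measure_mono hsub)) (not_le.2 (hsmall hj1))

lemma halfBern_fin (k p : ℝ) : IsFiniteMeasure (halfBern k p) := by
  constructor
  unfold halfBern
  rw [Measure.add_apply, Measure.smul_apply, Measure.smul_apply, smul_eq_mul, smul_eq_mul]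
  simp only [measure_univ, mul_one]
  exact ENNReal.add_lt_top.2 ⟨ENNReal.ofReal_lt_top, ENNReal.ofReal_lt_top⟩

lemma halfBern_k {k : ℝ} (p : ℝ) (hk1 : k < 1) : halfBern k p {k} = ENNReal.ofReal p := by
  unfold halfBern
  rw [Measure.add_apply, Measure.smul_apply, Measure.smul_apply, smul_eq_mul, smul_eq_mul,
    Measure.dirac_apply' _ (measurableSet_singleton _),
    Measure.dirac_apply' _ (measurableSet_singleton _)]
  rw [Set.indicator_of_mem (Set.mem_singleton _), Set.indicator_of_notMem (by
    simp only [Set.mem_singleton_iff]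
    exact fun h => (ne_of_lt hk1) h.symm)]
  simp

lemma halfBern_one {k : ℝ} (p : ℝ) (hk1 : k < 1) :
    halfBern k p {1} = ENNReal.ofReal (1 - p) := by
  unfold halfBern
  rw [Measure.add_apply, Measure.smul_apply, Measure.smul_apply, smul_eq_mul, smul_eq_mul,
    Measure.dirac_apply' _ (measurableSet_singleton _),
    Measure.dirac_apply' _ (measurableSet_singleton _)]
  rw [Set.indicator_of_notMem (by
    simp only [Set.mem_singleton_iff]
    exact ne_of_lt hk1), Set.indicator_of_mem (Set.mem_singleton _)]
  simp

lemma pi_halfBern_point (k p : ℝ) (hk1 : k < 1) (T : Finset (Fin n)) :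
    Measure.pi (fun _ : Fin n => halfBern k p) {pointT n k T} = Wt n p T := by
  classical
  haveI : IsFiniteMeasure (halfBern k p) := halfBern_fin k p
  rw [← Set.univ_pi_singleton, Measure.pi_pi]
  have h : ∀ i : Fin n, halfBern k p {pointT n k T i}
      = (if i ∈ T then ENNReal.ofReal p else ENNReal.ofReal (1-p)) := by
    intro i
    unfold pointT
    by_cases hi : i ∈ T
    · rw [if_pos hi, if_pos hi]
      exact halfBern_k p hk1
    · rw [if_neg hi, if_neg hi]
      exact halfBern_one p hk1
  rw [Finset.prod_congr rfl fun i _ => h i, prod_ite_const]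
  rfl

end Stmt9Aux

open Stmt9Aux Finset

/-- Main theorem for half-Bernoulli distributions: the bound m_α has guaranteed coverage. -/
theorem stmt9 (n : ℕ) (hn : 1 ≤ n) (α : ℝ) (hα : α ∈ Set.Ioo (0:ℝ) 1)
    (k μ : ℝ) (hk0 : 0 ≤ k) (hk1 : k < 1) (hkμ : k ≤ μ) (hμ1 : μ ≤ 1) :
    ENNReal.ofReal (1 - α) ≤
      Measure.pi (fun _ : Fin n => halfBern k ((1 - μ) / (1 - k)))
        {ω | μ ≤ mAlpha α (sortVec ω)} := by
  classical
  have hkpos : (0:ℝ) < 1 - k := by linarith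
  set p : ℝ := (1 - μ) / (1 - k) with hp
  have hp0 : 0 ≤ p := div_nonneg (by linarith) (by linarith)
  have hp1 : p ≤ 1 := by
    rw [hp, div_le_one hkpos]; linarith
  haveI : IsFiniteMeasure (halfBern k p) := halfBern_fin k p
  set B : ℕ → ENNReal :=
    fun m => ∑ T ∈ univ.powerset.filter (fun T : Finset (Fin n) => T.card ≤ m), Wt n p T
    with hB
  have hBn : ENNReal.ofReal (1 - α) ≤ B n := by
    rw [hB]
    simp only
    rw [← cube_count p hp0 hp1 n]
    have hU : {ω : Fin n → ℝ | (univ.filter fun i => ω i ≤ p).card ≤ n} = Set.univ := by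
      ext ω
      simp only [Set.mem_setOf_eq, Set.mem_univ, iff_true]
      exact le_trans (card_filter_le _ _) (by simp)
    rw [hU]
    have huniv : unifCube n Set.univ = 1 := by
      haveI := nu1_fin
      rw [← Set.pi_univ Set.univ, unifCube, Measure.pi_pi]
      simp [nu1_univ]
    rw [huniv]
    exact ENNReal.ofReal_le_one.2 (by linarith [hα.1])
  have hex : ∃ m, ENNReal.ofReal (1 - α) ≤ B m := ⟨n, hBn⟩
  set m := Nat.find hex with hm
  have hmn : m ≤ n := Nat.find_le hBn
  have hspec : ENNReal.ofReal (1 - α) ≤ B m := Nat.find_spec hex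
  have hmin : ∀ m' < m, ¬ ENNReal.ofReal (1 - α) ≤ B m' := fun m' h => Nat.find_min hex h
  have hsub : (⋃ T ∈ univ.powerset.filter (fun T : Finset (Fin n) => T.card ≤ m),
        ({pointT n k T} : Set (Fin n → ℝ)))
      ⊆ {ω : Fin n → ℝ | μ ≤ mAlpha α (sortVec ω)} := by
    intro ω hω
    simp only [Set.mem_iUnion, exists_prop, Set.mem_singleton_iff] at hω
    obtain ⟨T, hT, rfl⟩ := hω
    rw [mem_filter, mem_powerset] at hT
    simp only [Set.mem_setOf_eq]
    rw [sortVec_pointT k hk1 T]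
    apply mu_le_mAlpha α hα k μ hk1 hμ1 (le_trans hT.2 hmn)
    intro hj1
    rw [← hp, cube_count p hp0 hp1 (T.card - 1)]
    exact not_le.1 (hmin (T.card - 1) (by omega))
  refine le_trans ?_ (measure_mono hsub)
  rw [measure_biUnion_finset]
  · have h : ∀ T ∈ univ.powerset.filter (fun T : Finset (Fin n) => T.card ≤ m),
        Measure.pi (fun _ : Fin n => halfBern k p) ({pointT n k T} : Set (Fin n → ℝ))
          = Wt n p T := fun T _ => pi_halfBern_point k p hk1 T
    rw [Finset.sum_congr rfl h]
    exact hspec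
  · intro T _ T' _ hne
    rw [Function.onFun, Set.disjoint_singleton]
    intro hTT
    apply hne
    ext i
    have := congrFun hTT i
    unfold pointT at this
    by_cases hi : i ∈ T <;> by_cases hi' : i ∈ T' <;> simp [hi, hi'] at this ⊢
    · exact absurd this (ne_of_lt hk1)
    · exact absurd this.symm (ne_of_lt hk1)
  · intro T _
    rw [← Set.univ_pi_singleton]
    exact MeasurableSet.univ_pi fun i => measurableSet_singleton _
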